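/- Let φ(x) = (x - γ)² + c with γ, c ∈ ℤ, and for n ≥ 1 let Δ_n denote the discriminant of the polynomial φ^n(x) (of degree 2^n). Then Δ_n = ± Δ_{n-1}² · 2^{2^n} · φ^n(γ). Consequently, every odd prime dividing Δ_n divides φ^m(γ) for some 1 ≤ m ≤ n. -/

import Mathlib

open Polynomial

/-- Discriminant of a monic polynomial over ℂ, via disc(f) = (-1)^{d(d-1)/2} ∏ f'(rᵢ). -/
noncomputable def discC (f : Polynomial ℂ) : ℂ :=
  (-1) ^ (f.natDegree * (f.natDegree - 1) / 2) *
    (f.roots.map fun r => (Polynomial.derivative f).eval r).prod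

/-- The n-th iterate of (X - γ)² + c as a polynomial over ℂ. -/
noncomputable def iterPoly (γ c : ℤ) : ℕ → Polynomial ℂ
  | 0 => X
  | n + 1 => ((X - C (γ : ℂ)) ^ 2 + C (c : ℂ)).comp (iterPoly γ c n)

section aux
variable (γ c : ℤ)

lemma iterPoly_zero : iterPoly γ c 0 = X := rfl

lemma iterPoly_succ (n : ℕ) :
    iterPoly γ c (n + 1) = ((X - C (γ : ℂ)) ^ 2 + C (c : ℂ)).comp (iterPoly γ c n) := rfl

lemma gDegLt : (C (c : ℂ)).degree < ((X - C (γ : ℂ)) ^ 2).degree := by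
  have hd : ((X - C (γ : ℂ)) ^ 2).degree = 2 := by
    rw [degree_pow, degree_X_sub_C]; rfl
  rw [hd]
  exact lt_of_le_of_lt degree_C_le (by norm_num)

lemma gMonic : (((X - C (γ : ℂ)) ^ 2 + C (c : ℂ))).Monic :=
  ((monic_X_sub_C _).pow 2).add_of_left (gDegLt γ c)

lemma gNatDegree : (((X - C (γ : ℂ)) ^ 2 + C (c : ℂ))).natDegree = 2 := by
  have h := degree_add_eq_left_of_degree_lt (gDegLt γ c)
  have hd : ((X - C (γ : ℂ)) ^ 2).degree = 2 := by
    rw [degree_pow, degree_X_sub_C]; rfl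
  rw [hd] at h
  exact natDegree_eq_of_degree_eq_some h

lemma iterPoly_natDegree (n : ℕ) : (iterPoly γ c n).natDegree = 2 ^ n := by
  induction n with
  | zero => simp [iterPoly_zero]
  | succ n ih => rw [iterPoly_succ, natDegree_comp, gNatDegree, ih, pow_succ, mul_comm]

lemma iterPoly_monic (n : ℕ) : (iterPoly γ c n).Monic := by
  induction n with
  | zero => exact monic_X
  | succ n ih =>
    rw [iterPoly_succ]
    exact (gMonic γ c).comp ih (by rw [iterPoly_natDegree]; positivity)

lemma iterPoly_ne_zero (n : ℕ) : iterPoly γ c n ≠ 0 := (iterPoly_monic γ c n).ne_zero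

lemma iterPoly_add (j k : ℕ) :
    iterPoly γ c (j + k) = (iterPoly γ c j).comp (iterPoly γ c k) := by
  induction j with
  | zero => simp [iterPoly_zero]
  | succ j ih =>
    have : j + 1 + k = (j + k) + 1 := by ring
    rw [this, iterPoly_succ, ih, iterPoly_succ, comp_assoc]

lemma iterPoly_derivative (n : ℕ) :
    derivative (iterPoly γ c n) =
      C ((2 : ℂ) ^ n) * ∏ k ∈ Finset.range n, (iterPoly γ c k - C (γ : ℂ)) := by
  induction n with
  | zero => simp [iterPoly_zero]
  | succ n ih =>
    rw [iterPoly_succ, derivative_comp, ih]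
    have hg : derivative ((X - C (γ : ℂ)) ^ 2 + C (c : ℂ)) = C 2 * (X - C (γ : ℂ)) := by
      simp [derivative_pow]
    rw [hg]
    have hcomp : (C (2:ℂ) * (X - C (γ : ℂ))).comp (iterPoly γ c n)
        = C 2 * (iterPoly γ c n - C (γ : ℂ)) := by
      simp [mul_comp, sub_comp]
    rw [hcomp, Finset.prod_range_succ, pow_succ, C_mul]
    ring

lemma iterPoly_eval_gamma (φ : ℤ → ℤ) (hφ : ∀ x, φ x = (x - γ) ^ 2 + c) (m : ℕ) :
    eval (γ : ℂ) (iterPoly γ c m) = ((φ^[m] γ : ℤ) : ℂ) := by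
  induction m with
  | zero => simp [iterPoly_zero]
  | succ m ih =>
    rw [iterPoly_succ, eval_comp, ih, Function.iterate_succ_apply', hφ]
    simp

end aux

section main
variable (γ c : ℤ)

lemma prod_map_sub_roots (p : Polynomial ℂ) (hp : p.Monic) (t : ℂ) :
    (p.roots.map fun r => t - r).prod = eval t p := by
  conv_rhs => rw [(IsAlgClosed.splits p).eq_prod_roots_of_monic hp]
  rw [eval_multiset_prod, Multiset.map_map]
  simp

lemma discC_closed (φ : ℤ → ℤ) (hφ : ∀ x, φ x = (x - γ) ^ 2 + c) (n : ℕ) :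
    ∃ s : ℂ, (s = 1 ∨ s = -1) ∧
      discC (iterPoly γ c n) =
        s * 2 ^ (n * 2 ^ n) *
          ∏ k ∈ Finset.range n, ((φ^[n - k] γ : ℤ) : ℂ) ^ 2 ^ k := by
  rcases Nat.eq_zero_or_pos n with rfl | hn
  · exact ⟨1, Or.inl rfl, by simp [discC, iterPoly_zero]⟩
  set a : ℂ := (γ : ℂ) with ha
  set F := iterPoly γ c n with hF
  have hFmonic : F.Monic := iterPoly_monic γ c n
  have hcardF : F.roots.card = 2 ^ n := by
    rw [splits_iff_card_roots.mp (IsAlgClosed.splits F), hF, iterPoly_natDegree]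
  set M : Polynomial ℂ := ∏ k ∈ Finset.range n, (iterPoly γ c k - C a) with hM
  have hMk : ∀ k : ℕ, (iterPoly γ c k - C a).Monic := by
    intro k
    have h1 : (iterPoly γ c k).Monic := iterPoly_monic γ c k
    rw [sub_eq_add_neg, ← C_neg]
    refine h1.add_of_left ?_
    rw [degree_eq_natDegree h1.ne_zero, iterPoly_natDegree]
    exact lt_of_le_of_lt degree_C_le (by exact_mod_cast Nat.cast_pos.mpr (pow_pos two_pos k))
  have hMmonic : M.Monic := monic_prod_of_monic _ _ fun k _ => hMk k
  have hcardk : ∀ k : ℕ, (iterPoly γ c k - C a).roots.card = 2 ^ k := by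
    intro k
    rw [splits_iff_card_roots.mp (IsAlgClosed.splits _), natDegree_sub_C,
      iterPoly_natDegree]
  -- derivative
  have hder : derivative F = C ((2 : ℂ) ^ n) * M := iterPoly_derivative γ c n
  -- step 1: pull out 2^n
  have step1 : (F.roots.map fun r => eval r (derivative F)).prod
      = 2 ^ (n * 2 ^ n) * (F.roots.map fun r => eval r M).prod := by
    have : (F.roots.map fun r => eval r (derivative F))
        = F.roots.map fun r => (2 : ℂ) ^ n * eval r M := by
      apply Multiset.map_congr rfl
      intro r _
      rw [hder]; simp
    rw [this, Multiset.prod_map_mul]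
    congr 1
    rw [Multiset.map_const', Multiset.prod_replicate, hcardF, ← pow_mul]
  -- step 2: swap products
  have hevalM : ∀ r : ℂ, eval r M = (M.roots.map fun t => r - t).prod := by
    intro r
    exact (prod_map_sub_roots M hMmonic r).symm
  have step2 : (F.roots.map fun r => eval r M).prod
      = (M.roots.map fun t => eval t F).prod := by
    have e1 : (F.roots.map fun r => eval r M)
        = F.roots.map fun r => (M.roots.map fun t => r - t).prod :=
      Multiset.map_congr rfl fun r _ => hevalM r
    rw [e1, Multiset.prod_map_prod_map]
    apply congrArg
    apply Multiset.map_congr rfl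
    intro t _
    have e2 : (F.roots.map fun r => r - t) = F.roots.map fun r => (-1) * (t - r) :=
      Multiset.map_congr rfl fun r _ => by ring
    rw [e2, Multiset.prod_map_mul, Multiset.map_const', Multiset.prod_replicate, hcardF,
      prod_map_sub_roots F hFmonic t]
    have : ((-1 : ℂ)) ^ 2 ^ n = 1 := by
      have : 2 ^ n = 2 * 2 ^ (n - 1) := by
        rw [← pow_succ']
        congr 1
        omega
      rw [this, pow_mul]
      norm_num
    rw [this, one_mul]
  -- step 3: evaluate over roots of M
  have step3 : (M.roots.map fun t => eval t F).prod
      = ∏ k ∈ Finset.range n, ((φ^[n - k] γ : ℤ) : ℂ) ^ 2 ^ k := by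
    have hMne : M ≠ 0 := hMmonic.ne_zero
    have hroots : M.roots = (Finset.range n).val.bind fun k => (iterPoly γ c k - C a).roots :=
      roots_prod _ _ hMne
    rw [hroots, Multiset.map_bind, Multiset.prod_bind]
    rw [Finset.prod_eq_multiset_prod]
    apply congrArg
    apply Multiset.map_congr rfl
    intro k hk
    have hkn : k < n := Finset.mem_range.mp hk
    have hconst : ((iterPoly γ c k - C a).roots.map fun t => eval t F)
        = (iterPoly γ c k - C a).roots.map fun _ => ((φ^[n - k] γ : ℤ) : ℂ) := by
      apply Multiset.map_congr rfl
      intro t ht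
      have htr : eval t (iterPoly γ c k) = a := by
        have h0 : eval t (iterPoly γ c k - C a) = 0 := (mem_roots (hMk k).ne_zero).mp ht
        rw [eval_sub, eval_C, sub_eq_zero] at h0
        exact h0
      have hdecomp : F = (iterPoly γ c (n - k)).comp (iterPoly γ c k) := by
        rw [hF, ← iterPoly_add]
        congr 1
        omega
      rw [hdecomp, eval_comp, htr, ha, iterPoly_eval_gamma γ c φ hφ]
    rw [hconst, Multiset.map_const', Multiset.prod_replicate, hcardk]
  -- assemble
  refine ⟨(-1) ^ (F.natDegree * (F.natDegree - 1) / 2), neg_one_pow_eq_or ℂ _, ?_⟩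
  rw [discC]
  rw [step1, step2, step3]
  ring

end main

theorem stmt11 (γ c : ℤ) (φ : ℤ → ℤ) (hφ : ∀ x, φ x = (x - γ) ^ 2 + c)
    (n : ℕ) (hn : 1 ≤ n) :
    (∃ s : ℂ, (s = 1 ∨ s = -1) ∧
      discC (iterPoly γ c n) =
        s * (discC (iterPoly γ c (n - 1))) ^ 2 * 2 ^ (2 ^ n) * ((φ^[n] γ : ℤ) : ℂ)) ∧
    ∀ p : ℕ, p.Prime → Odd p → ∀ D : ℤ, (D : ℂ) = discC (iterPoly γ c n) →
      (p : ℤ) ∣ D → ∃ m : ℕ, 1 ≤ m ∧ m ≤ n ∧ (p : ℤ) ∣ φ^[m] γ := by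
  constructor
  · obtain ⟨m, rfl⟩ : ∃ m, n = m + 1 := ⟨n - 1, by omega⟩
    simp only [Nat.add_sub_cancel]
    obtain ⟨s, hs, hsd⟩ := discC_closed γ c φ hφ (m + 1)
    obtain ⟨s', hs', hsd'⟩ := discC_closed γ c φ hφ m
    refine ⟨s, hs, ?_⟩
    have hs2 : s' ^ 2 = 1 := by rcases hs' with rfl | rfl <;> norm_num
    have hP : (∏ k ∈ Finset.range (m + 1), ((φ^[m + 1 - k] γ : ℤ) : ℂ) ^ 2 ^ k)
        = (∏ k ∈ Finset.range m, ((φ^[m - k] γ : ℤ) : ℂ) ^ 2 ^ k) ^ 2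
            * ((φ^[m + 1] γ : ℤ) : ℂ) := by
      rw [Finset.prod_range_succ']
      simp only [Nat.sub_zero, pow_zero, pow_one]
      congr 1
      rw [← Finset.prod_pow]
      apply Finset.prod_congr rfl
      intro k hk
      have h1 : m + 1 - (k + 1) = m - k := by omega
      rw [h1, ← pow_mul, pow_succ]
    have hexp : (m + 1) * 2 ^ (m + 1) = m * 2 ^ m * 2 + 2 ^ (m + 1) := by
      rw [pow_succ]; ring
    rcases hs' with rfl | rfl <;>
      · rw [hsd, hsd', hP, hexp, pow_add, pow_mul]; ring
  · intro p hp hodd D hD hdvd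
    obtain ⟨s, hs, hsd⟩ := discC_closed γ c φ hφ n
    set Dint : ℤ := 2 ^ (n * 2 ^ n) * ∏ k ∈ Finset.range n, (φ^[n - k] γ) ^ 2 ^ k with hDint
    have hcast : ((Dint : ℤ) : ℂ)
        = 2 ^ (n * 2 ^ n) * ∏ k ∈ Finset.range n, ((φ^[n - k] γ : ℤ) : ℂ) ^ 2 ^ k := by
      rw [hDint]; push_cast; ring
    have hdvd2 : (p : ℤ) ∣ Dint := by
      rcases hs with rfl | rfl
      · have : D = Dint := by
          apply Int.cast_injective (α := ℂ)
          rw [hD, hsd, hcast, one_mul]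
        rwa [this] at hdvd
      · have : D = -Dint := by
          apply Int.cast_injective (α := ℂ)
          rw [hD, hsd, Int.cast_neg, hcast]
          ring
        rw [this] at hdvd
        exact (dvd_neg).mp hdvd
    have hp' : Prime (p : ℤ) := Nat.prime_iff_prime_int.mp hp
    have hnot2 : ¬ (p : ℤ) ∣ 2 ^ (n * 2 ^ n) := by
      intro h
      have h2 : (p : ℤ) ∣ 2 := hp'.dvd_of_dvd_pow h
      have : (p : ℤ) ∣ (2 : ℕ) := by exact_mod_cast h2
      have hple : p ∣ 2 := Int.ofNat_dvd.mp this
      have := Nat.le_of_dvd (by norm_num) hple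
      have hodd' := Nat.odd_iff.mp hodd
      interval_cases p <;> simp_all
    rcases (hp'.dvd_mul.mp hdvd2) with h | h
    · exact absurd h hnot2
    · obtain ⟨k, hk, hdk⟩ := hp'.exists_mem_finset_dvd h
      have hkn : k < n := Finset.mem_range.mp hk
      exact ⟨n - k, by omega, by omega, hp'.dvd_of_dvd_pow hdk⟩
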